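/- Each individual round of the game (a Shape Up round or a Ship Out round) transforms an injective assignment A × Fin 4 → B × Fin 4 into another injective assignment; moreover each round changes the assignment by a swap structure: the set of cards assigned, together with cards remaining in the deck, is permuted. -/

import Mathlib

open Finset

variable {A B : Type*}

/-- The spots of a hand holding a spade (suit `3`). -/
def spadeSpots (h : Fin 4 → B × Fin 4) : Finset (Fin 4) :=
  Finset.univ.filter (fun i => (h i).2 = 3)

/-- Shape Up: swap spot `0` with the least spot holding a spade, if any. -/
def shapeUp (h : Fin 4 → B × Fin 4) : Fin 4 → B × Fin 4 :=
  if hs : (spadeSpots h).Nonempty then h ∘ (Equiv.swap 0 ((spadeSpots h).min' hs)) else h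

/-- Bad spades: spades lying in a spot other than the leftmost spot `0`. -/
def badSpades (h : Fin 4 → B × Fin 4) : Finset (Fin 4) :=
  Finset.univ.filter (fun i => i ≠ 0 ∧ (h i).2 = 3)

/-- The spot of the leftmost bad spade (junk value `0` if there is none). -/
def leftBad (h : Fin 4 → B × Fin 4) : Fin 4 :=
  if hb : (badSpades h).Nonempty then (badSpades h).min' hb else 0

/-- The card a player with a bad spade calls for: its name is the name of the hand
(the name of the leftmost spade, in spot `0`), and its suit is the suit `3 - i`
named by the spot `i` of the leftmost bad spade. -/
def request (h : Fin 4 → B × Fin 4) : B × Fin 4 :=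
  ((h 0).1, 3 - leftBad h)

/-- Ship Out, seen from one hand: replace the leftmost bad spade by the requested card. -/
def shipOutHand (h : Fin 4 → B × Fin 4) : Fin 4 → B × Fin 4 :=
  if (badSpades h).Nonempty then Function.update h (leftBad h) (request h) else h

/-- The hand of player `a` under the global assignment `f`. -/
def hand (f : A × Fin 4 → B × Fin 4) (a : A) : Fin 4 → B × Fin 4 :=
  fun i => f (a, i)

/-- The global Shape Up round: every player shapes up simultaneously. -/
def gShapeUp (f : A × Fin 4 → B × Fin 4) : A × Fin 4 → B × Fin 4 :=
  fun p => shapeUp (hand f p.1) p.2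

/-- A player is active in the Ship Out round if her hand is named
(spade in spot `0`) and contains a bad spade. -/
def isActive (f : A × Fin 4 → B × Fin 4) (a : A) : Prop :=
  (f (a, 0)).2 = 3 ∧ (badSpades (hand f a)).Nonempty

open Classical in
/-- The global Ship Out round: every active player swaps her leftmost bad spade
with the card she calls for, wherever that card is. -/
noncomputable def gShipOut (f : A × Fin 4 → B × Fin 4) : A × Fin 4 → B × Fin 4 :=
  fun p =>
    if isActive f p.1 ∧ p.2 = leftBad (hand f p.1) then request (hand f p.1)
    else if h : ∃ a', isActive f a' ∧ request (hand f a') = f p then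
      f (h.choose, leftBad (hand f h.choose))
    else f p

/-- The game: alternate Shape Up and Ship Out rounds, starting with Shape Up. -/
noncomputable def gameSeq (f : A × Fin 4 → B × Fin 4) : ℕ → (A × Fin 4 → B × Fin 4)
  | 0 => f
  | (k + 1) => if k % 2 = 0 then gShapeUp (gameSeq f k) else gShipOut (gameSeq f k)

open Classical in
/-- The score of a hand: the number of spots `i` holding the card whose name is the
name of the hand and whose suit `3 - i` is the suit named by spot `i`. -/
noncomputable def score (h : Fin 4 → B × Fin 4) : ℕ :=
  (Finset.univ.filter (fun i => h i = ((h 0).1, 3 - i))).card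

section Aux

variable {A B : Type*}

/-- The per-hand permutation of spots used in Shape Up. -/
def handPerm (h : Fin 4 → B × Fin 4) : Equiv.Perm (Fin 4) :=
  if hs : (spadeSpots h).Nonempty then Equiv.swap 0 ((spadeSpots h).min' hs) else 1

lemma shapeUp_eq_perm (h : Fin 4 → B × Fin 4) : shapeUp h = h ∘ handPerm h := by
  unfold shapeUp handPerm
  split <;> simp

/-- The domain permutation realizing a global Shape Up. -/
def tauShape (f : A × Fin 4 → B × Fin 4) : Equiv.Perm (A × Fin 4) where
  toFun p := (p.1, handPerm (hand f p.1) p.2)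
  invFun p := (p.1, (handPerm (hand f p.1)).symm p.2)
  left_inv p := by simp
  right_inv p := by simp

lemma gShapeUp_eq (f : A × Fin 4 → B × Fin 4) :
    gShapeUp f = f ∘ tauShape f := by
  funext p
  simp only [gShapeUp, shapeUp_eq_perm, Function.comp_apply, tauShape, Equiv.coe_fn_mk]
  rfl

lemma leftBad_mem {h : Fin 4 → B × Fin 4} (hb : (badSpades h).Nonempty) :
    leftBad h ∈ badSpades h := by
  unfold leftBad
  rw [dif_pos hb]
  exact Finset.min'_mem _ _

lemma leftBad_spec {f : A × Fin 4 → B × Fin 4} {a : A} (ha : isActive f a) :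
    leftBad (hand f a) ≠ 0 ∧ (f (a, leftBad (hand f a))).2 = 3 := by
  have := leftBad_mem ha.2
  exact (Finset.mem_filter.mp this).2

lemma three_sub_ne : ∀ i : Fin 4, i ≠ 0 → (3 : Fin 4) - i ≠ 3 := by decide

lemma req_suit {f : A × Fin 4 → B × Fin 4} {a : A} (ha : isActive f a) :
    (request (hand f a)).2 ≠ 3 :=
  three_sub_ne _ (leftBad_spec ha).1

lemma req_ne_bad {f : A × Fin 4 → B × Fin 4} {a b : A}
    (ha : isActive f a) (hb : isActive f b) :
    request (hand f a) ≠ f (b, leftBad (hand f b)) := by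
  intro h
  exact req_suit ha (by rw [h]; exact (leftBad_spec hb).2)

lemma req_inj {f : A × Fin 4 → B × Fin 4} (hf : Function.Injective f) {a b : A}
    (ha : isActive f a) (hb : isActive f b)
    (h : request (hand f a) = request (hand f b)) : a = b := by
  have h1 := congrArg Prod.fst h
  simp only [request] at h1
  have h2 : f (a, (0 : Fin 4)) = f (b, 0) := Prod.ext h1 (ha.1.trans hb.1.symm)
  exact (Prod.mk.injEq .. ▸ hf h2).1

open Classical in
/-- The deck involution realizing a global Ship Out. -/
noncomputable def shipFun (f : A × Fin 4 → B × Fin 4) (x : B × Fin 4) : B × Fin 4 :=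
  if h1 : ∃ a, isActive f a ∧ f (a, leftBad (hand f a)) = x then
    request (hand f h1.choose)
  else if h2 : ∃ a, isActive f a ∧ request (hand f a) = x then
    f (h2.choose, leftBad (hand f h2.choose))
  else x

lemma shipFun_invol {f : A × Fin 4 → B × Fin 4} (hf : Function.Injective f) :
    Function.Involutive (shipFun f) := by
  intro x
  by_cases h1 : ∃ a, isActive f a ∧ f (a, leftBad (hand f a)) = x
  · have hgx : shipFun f x = request (hand f h1.choose) := by
      rw [shipFun]; exact dif_pos h1
    rw [hgx]
    obtain ⟨hc1, hc2⟩ := h1.choose_spec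
    set c := h1.choose with hc
    have hne : ¬ ∃ a, isActive f a ∧ f (a, leftBad (hand f a)) = request (hand f c) := by
      rintro ⟨a, ha, hax⟩
      exact req_ne_bad hc1 ha hax.symm
    rw [shipFun, dif_neg hne]
    have hex : ∃ a, isActive f a ∧ request (hand f a) = request (hand f c) := ⟨c, hc1, rfl⟩
    rw [dif_pos hex]
    obtain ⟨hd1, hd2⟩ := hex.choose_spec
    have : hex.choose = c := req_inj hf hd1 hc1 hd2
    rw [this, hc2]
  · by_cases h2 : ∃ a, isActive f a ∧ request (hand f a) = x
    · have hgx : shipFun f x = f (h2.choose, leftBad (hand f h2.choose)) := by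
        rw [shipFun, dif_neg h1]; exact dif_pos h2
      rw [hgx]
      obtain ⟨hc1, hc2⟩ := h2.choose_spec
      set c := h2.choose with hc
      have hex : ∃ a, isActive f a ∧ f (a, leftBad (hand f a)) =
          f (c, leftBad (hand f c)) := ⟨c, hc1, rfl⟩
      rw [shipFun, dif_pos hex]
      obtain ⟨hd1, hd2⟩ := hex.choose_spec
      have : hex.choose = c := (Prod.mk.injEq .. ▸ hf hd2).1
      rw [this, hc2]
    · have hgx : shipFun f x = x := by
        rw [shipFun, dif_neg h1]; exact dif_neg h2
      rw [hgx, hgx]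

lemma gShipOut_eq {f : A × Fin 4 → B × Fin 4} (hf : Function.Injective f) :
    gShipOut f = shipFun f ∘ f := by
  funext p
  simp only [Function.comp_apply]
  by_cases hA : isActive f p.1 ∧ p.2 = leftBad (hand f p.1)
  · rw [gShipOut, if_pos hA]
    have hex : ∃ a, isActive f a ∧ f (a, leftBad (hand f a)) = f p :=
      ⟨p.1, hA.1, by rw [← hA.2]⟩
    rw [shipFun, dif_pos hex]
    obtain ⟨hc1, hc2⟩ := hex.choose_spec
    have hp : f (hex.choose, leftBad (hand f hex.choose)) = f (p.1, p.2) := by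
      rwa [Prod.mk.eta]
    have : hex.choose = p.1 := (Prod.mk.injEq .. ▸ hf hp).1
    rw [this]
  · have hne : ¬ ∃ a, isActive f a ∧ f (a, leftBad (hand f a)) = f p := by
      rintro ⟨a, ha, hax⟩
      have : (a, leftBad (hand f a)) = p := hf hax
      exact hA ⟨this ▸ ha, by rw [← this]⟩
    by_cases h2 : ∃ a', isActive f a' ∧ request (hand f a') = f p
    · rw [gShipOut, if_neg hA, dif_pos h2, shipFun, dif_neg hne, dif_pos h2]
    · rw [gShipOut, if_neg hA, dif_neg h2, shipFun, dif_neg hne, dif_neg h2]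

end Aux

/-- Each round of the game transforms an injective assignment into an injective
assignment; moreover each round acts by a permutation of the deck `B × Fin 4`
(cards in hands together with cards remaining in the deck are permuted). -/
theorem rounds_preserve_injective (f : A × Fin 4 → B × Fin 4)
    (hf : Function.Injective f) :
    Function.Injective (gShapeUp f) ∧ Function.Injective (gShipOut f) ∧
      (∃ σ : Equiv.Perm (B × Fin 4), gShapeUp f = σ ∘ f) ∧
      (∃ σ : Equiv.Perm (B × Fin 4), gShipOut f = σ ∘ f) := by
  constructor
  · rw [gShapeUp_eq]
    exact hf.comp (tauShape f).injective
  refine ⟨?_, ?_, ?_⟩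
  · rw [gShipOut_eq hf]
    exact ((shipFun_invol hf).toPerm _).injective.comp hf
  · exact ⟨(tauShape f).viaEmbedding ⟨f, hf⟩, by
      rw [gShapeUp_eq]
      funext p
      exact ((tauShape f).viaEmbedding_apply ⟨f, hf⟩ p).symm⟩
  · exact ⟨(shipFun_invol hf).toPerm _, gShipOut_eq hf⟩
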